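/- Fix a concrete location l storing integers and define for i = 1, 2 the abstract locations 𝔟ᵢ with footprint {l}, rely 𝔟ᵢ^R = {(h,h') | h(l) and h'(l) are integers whose i-th bit agrees}, and guarantee 𝔟ᵢ^G the functions setting the i-th bit of h(l) to a fixed value and leaving all other bits and all other locations unchanged. Then 𝔟₁ and 𝔟₂ are independent abstract locations, despite having identical (overlapping) footprints. -/

import Mathlib

/-- The raw data of an abstract location: a rely relation on heaps, a guarantee set of
heap functions, and a footprint. -/
structure RawLoc (H L : Type) : Type where
  R : H → H → Prop
  G : Set (H → H)
  F : H → Set L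

/-- An abstract location on heaps `H` (with locations `L`, values `V`, domain map
`dom` and lookup `look`): raw data subject to the rely/guarantee/footprint
conditions of the paper. -/
structure AbsLoc (H L V : Type) (dom : H → Set L) (look : H → L → V)
    extends RawLoc H L : Type where
  R_nonempty : ∃ h, R h h
  R_symm : ∀ {h h'}, R h h' → R h' h
  R_trans : ∀ {h h' h''}, R h h' → R h' h'' → R h h''
  G_comp : ∀ ι κ, ι ∈ G → κ ∈ G → (ι ∘ κ) ∈ G
  rely_guarantee : ∀ ι ∈ G, ∀ {h h' : H}, R h h' →
    R (ι h) (ι h') ∧ R (ι h) (ι (ι h)) ∧ R (ι h') (ι (ι h'))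
  footprint_rely : ∀ {h h' h1 h1' : H},
    (∀ l ∈ F h, look h1 l = look h l) → (∀ l ∈ F h', look h1' l = look h' l) →
    R h h' → R h1 h1'
  guarantee_local : ∀ ι ∈ G, ∀ h : H, dom h ⊆ dom (ι h) ∧
    ∀ l ∈ dom h, l ∉ F h → l ∉ F (ι h) ∧ look h l = look (ι h) l

/-- Independence of two abstract locations (stated on their raw data). -/
def Indep {H L V : Type} (dom : H → Set L) (look : H → L → V)
    (l1 l2 : RawLoc H L) : Prop :=
  (∀ ι ∈ l1.G, ∀ h h', l1.R h h → l2.R h h' → l2.R (ι h) h') ∧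
  (∀ ι ∈ l2.G, ∀ h h', l2.R h h → l1.R h h' → l1.R (ι h) h') ∧
  (∀ ι ∈ l1.G, ∀ h : H, ∀ l ∈ dom h, l ∉ l2.F h → l ∉ l2.F (ι h)) ∧
  (∀ ι ∈ l2.G, ∀ h : H, ∀ l ∈ dom h, l ∉ l1.F h → l ∉ l1.F (ι h)) ∧
  (∀ h1 h2, l1.R h1 h1 → l2.R h2 h2 → ∃ h, l1.R h h1 ∧ l2.R h h2)

/-- Closure of a set of functions under composition. -/
inductive CompClosure {H : Type} (S : Set (H → H)) : (H → H) → Prop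
  | base {f} : f ∈ S → CompClosure S f
  | comp {f g} : CompClosure S f → CompClosure S g → CompClosure S (f ∘ g)

/-- The joint location `𝔩₁ ⊗ 𝔩₂`: relies intersected, guarantees the composition
closure of the union, footprints united. -/
def jointRaw {H L : Type} (l1 l2 : RawLoc H L) : RawLoc H L where
  R h h' := l1.R h h' ∧ l2.R h h'
  G := {f | CompClosure (l1.G ∪ l2.G) f}
  F h := l1.F h ∪ l2.F h

/-- The `i`-th bit of an integer `n` (for `i ≥ 1`): `(n / 2^(i-1)) % 2`. -/
def ibit (i : ℕ) (n : ℤ) : ℤ := (n / 2 ^ (i - 1)) % 2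

/-- Setting the `i`-th bit of `n` to `b`, changing only that bit. -/
def isetbit (i : ℕ) (b : ℤ) (n : ℤ) : ℤ :=
  n - ibit i n * 2 ^ (i - 1) + b * 2 ^ (i - 1)

/-- The specification of the abstract location `𝔟ᵢ`: footprint `{l}`, rely "both
contents at `l` are integers whose `i`-th bit agrees", guarantee the functions
setting the `i`-th bit of the integer stored at `l` to a fixed value (and acting as
the identity on heaps not storing an integer at `l`). -/
def bitLocSpec {H L V : Type} (dom : H → Set L) (look : H → L → V)
    (upd : H → L → V → H) (asInt : V → Option ℤ) (ofInt : ℤ → V)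
    (i : ℕ) (l : L) (a : AbsLoc H L V dom look) : Prop :=
  a.R = (fun h h' => ∃ m n : ℤ, asInt (look h l) = some m ∧
      asInt (look h' l) = some n ∧ ibit i m = ibit i n) ∧
  a.G = {f | ∃ b : ℤ, (b = 0 ∨ b = 1) ∧
      (∀ h n, asInt (look h l) = some n → f h = upd h l (ofInt (isetbit i b n))) ∧
      (∀ h, asInt (look h l) = none → f h = h)} ∧
  a.F = fun _ => ({l} : Set L)

lemma bit01 (i : ℕ) (n : ℤ) : ibit i n = 0 ∨ ibit i n = 1 := by
  unfold ibit; omega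

lemma exists_bitLoc {H L V : Type} (dom : H → Set L) (look : H → L → V)
    (upd : H → L → V → H) (asInt : V → Option ℤ) (ofInt : ℤ → V)
    (h_of : ∀ n : ℤ, asInt (ofInt n) = some n)
    (hdom : ∀ h l v, dom (upd h l v) = dom h)
    (hlook_eq : ∀ h l v, look (upd h l v) l = v)
    (hlook_ne : ∀ h l v l', l' ≠ l → look (upd h l v) l' = look h l')
    (hupd_upd : ∀ h l v v', upd (upd h l v) l v' = upd h l v')
    (hex : ∀ l : L, ∃ h : H, ∃ n : ℤ, l ∈ dom h ∧ asInt (look h l) = some n)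
    (i : ℕ) (l : L)
    (hbit : ∀ b n : ℤ, (b = 0 ∨ b = 1) → ibit i (isetbit i b n) = b)
    (hset : ∀ b b' n : ℤ, (b = 0 ∨ b = 1) → (b' = 0 ∨ b' = 1) →
      isetbit i b (isetbit i b' n) = isetbit i b n) :
    ∃ a : AbsLoc H L V dom look, bitLocSpec dom look upd asInt ofInt i l a := by
  refine ⟨⟨⟨fun h h' => ∃ m n : ℤ, asInt (look h l) = some m ∧
      asInt (look h' l) = some n ∧ ibit i m = ibit i n,
      {f | ∃ b : ℤ, (b = 0 ∨ b = 1) ∧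
        (∀ h n, asInt (look h l) = some n → f h = upd h l (ofInt (isetbit i b n))) ∧
        (∀ h, asInt (look h l) = none → f h = h)},
      fun _ => ({l} : Set L)⟩, ?_, ?_, ?_, ?_, ?_, ?_, ?_⟩, rfl, rfl, rfl⟩
  · obtain ⟨h, n, _, hn⟩ := hex l
    exact ⟨h, n, n, hn, hn, rfl⟩
  · rintro h h' ⟨m, n, hm, hn, e⟩
    exact ⟨n, m, hn, hm, e.symm⟩
  · rintro h h' h'' ⟨m, n, hm, hn, e⟩ ⟨n', k, hn', hk, e'⟩
    rw [hn] at hn'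
    obtain rfl := Option.some.inj hn'
    exact ⟨m, k, hm, hk, e.trans e'⟩
  · rintro ι κ ⟨b, hb, hι, hι0⟩ ⟨b', hb', hκ, hκ0⟩
    refine ⟨b, hb, ?_, ?_⟩
    · intro h n hn
      have h1 := hκ h n hn
      have h2 : asInt (look (κ h) l) = some (isetbit i b' n) := by
        rw [h1, hlook_eq, h_of]
      have h3 := hι (κ h) _ h2
      show ι (κ h) = _
      rw [h3, h1, hupd_upd, hset b b' n hb hb']
    · intro h hn
      show ι (κ h) = h
      rw [hκ0 h hn, hι0 h hn]
  · rintro ι ⟨b, hb, hι, hι0⟩ h h' ⟨m, n, hm, hn, e⟩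
    have am : asInt (look (ι h) l) = some (isetbit i b m) := by
      rw [hι h m hm, hlook_eq, h_of]
    have an : asInt (look (ι h') l) = some (isetbit i b n) := by
      rw [hι h' n hn, hlook_eq, h_of]
    have am2 : asInt (look (ι (ι h)) l) = some (isetbit i b (isetbit i b m)) := by
      rw [hι _ _ am, hlook_eq, h_of]
    have an2 : asInt (look (ι (ι h')) l) = some (isetbit i b (isetbit i b n)) := by
      rw [hι _ _ an, hlook_eq, h_of]
    exact ⟨⟨_, _, am, an, by rw [hbit _ _ hb, hbit _ _ hb]⟩,
      ⟨_, _, am, am2, by rw [hbit _ _ hb, hbit _ _ hb]⟩,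
      ⟨_, _, an, an2, by rw [hbit _ _ hb, hbit _ _ hb]⟩⟩
  · rintro h h' h1 h1' e1 e1' ⟨m, n, hm, hn, e⟩
    refine ⟨m, n, ?_, ?_, e⟩
    · rw [e1 l rfl]; exact hm
    · rw [e1' l rfl]; exact hn
  · rintro ι ⟨b, hb, hι, hι0⟩ h
    constructor
    · rcases hm : asInt (look h l) with _ | n
      · rw [hι0 h hm]
      · rw [hι h n hm, hdom]
    · intro l' _ hl'
      refine ⟨hl', ?_⟩
      rcases hm : asInt (look h l) with _ | n
      · rw [hι0 h hm]
      · rw [hι h n hm]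
        exact (hlook_ne h l _ l' hl').symm


/-- Fixing a concrete location `l` storing integers, the two abstract locations
`𝔟₁` and `𝔟₂` (whose relies compare the first, resp. second, bit of the integer
stored at `l`, and whose guarantees set that bit) are abstract locations and are
independent, despite having identical overlapping footprints `{l}`. -/
theorem stmt_14 {H L V : Type} (dom : H → Set L) (look : H → L → V)
    (upd : H → L → V → H) (asInt : V → Option ℤ) (ofInt : ℤ → V)
    (h_of : ∀ n : ℤ, asInt (ofInt n) = some n)
    (hdom : ∀ h l v, dom (upd h l v) = dom h)
    (hlook_eq : ∀ h l v, look (upd h l v) l = v)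
    (hlook_ne : ∀ h l v l', l' ≠ l → look (upd h l v) l' = look h l')
    (hupd_upd : ∀ h l v v', upd (upd h l v) l v' = upd h l v')
    (hex : ∀ l : L, ∃ h : H, ∃ n : ℤ, l ∈ dom h ∧ asInt (look h l) = some n)
    (l : L) :
    ∃ b1 b2 : AbsLoc H L V dom look,
      bitLocSpec dom look upd asInt ofInt 1 l b1 ∧
      bitLocSpec dom look upd asInt ofInt 2 l b2 ∧
      Indep dom look b1.toRawLoc b2.toRawLoc := by
  have hbit1 : ∀ b n : ℤ, (b = 0 ∨ b = 1) → ibit 1 (isetbit 1 b n) = b := by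
    intro b n hb; simp only [ibit, isetbit]; norm_num; omega
  have hbit2 : ∀ b n : ℤ, (b = 0 ∨ b = 1) → ibit 2 (isetbit 2 b n) = b := by
    intro b n hb; simp only [ibit, isetbit]; norm_num; omega
  have hset1 : ∀ b b' n : ℤ, (b = 0 ∨ b = 1) → (b' = 0 ∨ b' = 1) →
      isetbit 1 b (isetbit 1 b' n) = isetbit 1 b n := by
    intro b b' n hb hb'; simp only [ibit, isetbit]; norm_num; omega
  have hset2 : ∀ b b' n : ℤ, (b = 0 ∨ b = 1) → (b' = 0 ∨ b' = 1) →
      isetbit 2 b (isetbit 2 b' n) = isetbit 2 b n := by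
    intro b b' n hb hb'; simp only [ibit, isetbit]; norm_num; omega
  have cross12 : ∀ b n : ℤ, (b = 0 ∨ b = 1) → ibit 2 (isetbit 1 b n) = ibit 2 n := by
    intro b n hb; simp only [ibit, isetbit]; norm_num; omega
  have cross21 : ∀ b n : ℤ, (b = 0 ∨ b = 1) → ibit 1 (isetbit 2 b n) = ibit 1 n := by
    intro b n hb; simp only [ibit, isetbit]; norm_num
  obtain ⟨b1, hb1⟩ := exists_bitLoc dom look upd asInt ofInt h_of hdom hlook_eq
    hlook_ne hupd_upd hex 1 l hbit1 hset1
  obtain ⟨b2, hb2⟩ := exists_bitLoc dom look upd asInt ofInt h_of hdom hlook_eq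
    hlook_ne hupd_upd hex 2 l hbit2 hset2
  refine ⟨b1, b2, hb1, hb2, ?_⟩
  obtain ⟨hR1, hG1, hF1⟩ := hb1
  obtain ⟨hR2, hG2, hF2⟩ := hb2
  refine ⟨?_, ?_, ?_, ?_, ?_⟩
  · intro ι hι h h' h11 h22
    rw [hG1] at hι; rw [hR2] at h22 ⊢
    obtain ⟨b, hb, hs, _⟩ := hι
    obtain ⟨m, n, hm, hn, e⟩ := h22
    have am : asInt (look (ι h) l) = some (isetbit 1 b m) := by
      rw [hs h m hm, hlook_eq, h_of]
    exact ⟨_, n, am, hn, by rw [cross12 _ _ hb]; exact e⟩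
  · intro ι hι h h' h11 h22
    rw [hG2] at hι; rw [hR1] at h22 ⊢
    obtain ⟨b, hb, hs, _⟩ := hι
    obtain ⟨m, n, hm, hn, e⟩ := h22
    have am : asInt (look (ι h) l) = some (isetbit 2 b m) := by
      rw [hs h m hm, hlook_eq, h_of]
    exact ⟨_, n, am, hn, by rw [cross21 _ _ hb]; exact e⟩
  · intro ι _ h l' _ hl'
    rw [hF2] at hl' ⊢; exact hl'
  · intro ι _ h l' _ hl'
    rw [hF1] at hl' ⊢; exact hl'
  · intro h1 h2 h11 h22
    rw [hR1] at h11; rw [hR2] at h22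
    obtain ⟨m1, _, hm1, _, _⟩ := h11
    obtain ⟨m2, _, hm2, _, _⟩ := h22
    refine ⟨upd h1 l (ofInt (isetbit 2 (ibit 2 m2) m1)), ?_, ?_⟩
    · rw [hR1]
      exact ⟨_, m1, by rw [hlook_eq, h_of], hm1, cross21 _ _ (bit01 2 m2)⟩
    · rw [hR2]
      exact ⟨_, m2, by rw [hlook_eq, h_of], hm2, hbit2 _ _ (bit01 2 m2)⟩
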